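/- Let ε₀ satisfy π/τ ≤ ε₀ < π and let ε be uniformly distributed on [-ε₀, ε₀]. Then for all a, b with 0 < a ≤ b ≤ Gm, the probability that a ≤ G(ε) ≤ b equals the integral over g from a to b of 1/(τ·ε₀·√g·√(Gm − g)) with respect to Lebesgue measure. -/

import Mathlib

open Real MeasureTheory

/-- The cosine antenna gain with maximum gain `Gm` and beam-spread parameter `τ`. -/
noncomputable def gain (Gm τ θ : ℝ) : ℝ :=
  if |θ| ≤ Real.pi / τ then Gm * Real.cos (τ * θ / 2) ^ 2 else 0

lemma arccos_anti {x y : ℝ} (h : x ≤ y) : Real.arccos y ≤ Real.arccos x := by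
  rw [Real.arccos_eq_pi_div_two_sub_arcsin, Real.arccos_eq_pi_div_two_sub_arcsin]
  exact sub_le_sub_left (Real.monotone_arcsin h) _

lemma gain_set_eq (Gm τ ε₀ : ℝ) (hGm : 0 < Gm) (hτ : 1 ≤ τ)
    (hε₁ : Real.pi / τ ≤ ε₀) (a b : ℝ) (ha : 0 < a) (hab : a ≤ b) (hb : b ≤ Gm) :
    {θ ∈ Set.Icc (-ε₀) ε₀ | a ≤ gain Gm τ θ ∧ gain Gm τ θ ≤ b}
      = Set.Icc (-(2 * Real.arccos (Real.sqrt (a / Gm)) / τ))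
          (-(2 * Real.arccos (Real.sqrt (b / Gm)) / τ))
        ∪ Set.Icc (2 * Real.arccos (Real.sqrt (b / Gm)) / τ)
          (2 * Real.arccos (Real.sqrt (a / Gm)) / τ) := by
  have hτ0 : 0 < τ := lt_of_lt_of_le one_pos hτ
  set c := Real.sqrt (a / Gm) with hc
  set d := Real.sqrt (b / Gm) with hd
  have hc0 : 0 < c := Real.sqrt_pos.2 (div_pos ha hGm)
  have hd1 : d ≤ 1 := by
    rw [hd, show (1:ℝ) = Real.sqrt 1 by simp]
    exact Real.sqrt_le_sqrt ((div_le_one hGm).2 hb)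
  have hcd : c ≤ d := Real.sqrt_le_sqrt (div_le_div_of_nonneg_right hab hGm.le)
  have hc1 : c ≤ 1 := le_trans hcd hd1
  set α := Real.arccos c with hα
  set β := Real.arccos d with hβ
  have hα0 : 0 ≤ α := Real.arccos_nonneg c
  have hβ0 : 0 ≤ β := Real.arccos_nonneg d
  have hβα : β ≤ α := arccos_anti hcd
  have hαpi2 : α ≤ Real.pi / 2 := Real.arccos_le_pi_div_two.2 hc0.le
  have hcosα : Real.cos α = c := Real.cos_arccos (by linarith) hc1
  have hcosβ : Real.cos β = d := Real.cos_arccos (by linarith) hd1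
  have hca : c ^ 2 = a / Gm := Real.sq_sqrt (div_nonneg ha.le hGm.le)
  have hdb : d ^ 2 = b / Gm := Real.sq_sqrt (div_nonneg (by linarith) hGm.le)
  clear_value c d α β
  clear hc hd hα hβ
  have key : ∀ θ : ℝ, (θ ∈ Set.Icc (-ε₀) ε₀ ∧ a ≤ gain Gm τ θ ∧ gain Gm τ θ ≤ b)
      ↔ (2 * β / τ ≤ |θ| ∧ |θ| ≤ 2 * α / τ) := by
    intro θ
    have hcosabs : Real.cos (τ * θ / 2) ^ 2 = Real.cos (τ * |θ| / 2) ^ 2 := by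
      rcases abs_cases θ with ⟨h, _⟩ | ⟨h, _⟩ <;> rw [h]
      rw [show τ * -θ / 2 = -(τ * θ / 2) by ring, Real.cos_neg]
    constructor
    · rintro ⟨_, h1, h2⟩
      have hθle : |θ| ≤ Real.pi / τ := by
        by_contra h
        simp only [gain, if_neg h] at h1
        linarith
      simp only [gain, if_pos hθle, hcosabs] at h1 h2
      set φ := τ * |θ| / 2 with hφdef
      clear_value φ
      have hφ0 : 0 ≤ φ := by rw [hφdef]; positivity
      have hφle : φ ≤ Real.pi / 2 := by
        rw [hφdef]
        rw [le_div_iff₀ hτ0] at hθle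
        linarith
      have hcosφ0 : 0 ≤ Real.cos φ := Real.cos_nonneg_of_neg_pi_div_two_le_of_le
        (by linarith) hφle
      have hc_le : c ≤ Real.cos φ := by
        refine le_of_pow_le_pow_left₀ two_ne_zero hcosφ0 ?_
        rw [hca]; exact (div_le_iff₀ hGm).2 (by linarith)
      have hd_ge : Real.cos φ ≤ d := by
        refine le_of_pow_le_pow_left₀ two_ne_zero (hc0.le.trans hcd) ?_
        rw [hdb]; exact (le_div_iff₀ hGm).2 (by linarith)
      have hφα : φ ≤ α := by
        by_contra hcon
        push_neg at hcon
        have := Real.strictAntiOn_cos ⟨hα0, by linarith [Real.pi_pos]⟩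
          ⟨hφ0, by linarith [Real.pi_pos]⟩ hcon
        rw [hcosα] at this; linarith
      have hφβ : β ≤ φ := by
        by_contra hcon
        push_neg at hcon
        have := Real.strictAntiOn_cos ⟨hφ0, by linarith [Real.pi_pos]⟩
          ⟨hβ0, by linarith [Real.pi_pos]⟩ hcon
        rw [hcosβ] at this; linarith
      rw [hφdef] at hφα hφβ
      constructor
      · rw [div_le_iff₀ hτ0]; linarith
      · rw [le_div_iff₀ hτ0]; linarith
    · rintro ⟨hl, hr⟩
      have hθle : |θ| ≤ Real.pi / τ := by
        refine le_trans hr ?_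
        rw [div_le_div_iff₀ hτ0 hτ0]
        nlinarith
      have hmem : θ ∈ Set.Icc (-ε₀) ε₀ := by
        rw [Set.mem_Icc, ← abs_le]
        exact le_trans hθle hε₁
      refine ⟨hmem, ?_⟩
      simp only [gain, if_pos hθle, hcosabs]
      set φ := τ * |θ| / 2 with hφdef
      clear_value φ
      have hφ0 : 0 ≤ φ := by rw [hφdef]; positivity
      have hβφ : β ≤ φ := by rw [div_le_iff₀ hτ0] at hl; rw [hφdef]; linarith
      have hφα : φ ≤ α := by rw [le_div_iff₀ hτ0] at hr; rw [hφdef]; linarith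
      have h1 : c ≤ Real.cos φ := by
        rw [← hcosα]
        exact Real.cos_le_cos_of_nonneg_of_le_pi hφ0 (by linarith [Real.pi_pos]) hφα
      have h2 : Real.cos φ ≤ d := by
        rw [← hcosβ]
        exact Real.cos_le_cos_of_nonneg_of_le_pi hβ0 (by linarith [Real.pi_pos]) hβφ
      have hcosφ0 : 0 ≤ Real.cos φ := le_trans hc0.le h1
      have h3 : c ^ 2 ≤ Real.cos φ ^ 2 := pow_le_pow_left₀ hc0.le h1 2
      have h4 : Real.cos φ ^ 2 ≤ d ^ 2 := pow_le_pow_left₀ hcosφ0 h2 2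
      rw [hca, div_le_iff₀ hGm] at h3
      rw [hdb, le_div_iff₀ hGm] at h4
      exact ⟨by linarith, by linarith⟩
  ext θ
  simp only [Set.mem_setOf_eq, Set.mem_Icc, Set.mem_union]
  rw [← Set.mem_Icc, key θ]
  have h2β : 0 ≤ 2 * β / τ := by positivity
  constructor
  · rintro ⟨h1, h2⟩
    rcases le_total 0 θ with h | h
    · right; rw [abs_of_nonneg h] at h1 h2; exact ⟨h1, h2⟩
    · left; rw [abs_of_nonpos h] at h1 h2; exact ⟨by linarith, by linarith⟩
  · rintro (⟨h1, h2⟩ | ⟨h1, h2⟩)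
    · have hθ : θ ≤ 0 := by linarith
      rw [abs_of_nonpos hθ]; exact ⟨by linarith, by linarith⟩
    · have hθ : 0 ≤ θ := by linarith
      rw [abs_of_nonneg hθ]; exact ⟨by linarith, by linarith⟩

lemma deriv_arccos_sqrt_div {Gm x : ℝ} (hGm : 0 < Gm) (hx : 0 < x) (hxG : x < Gm) :
    HasDerivAt (fun g => Real.arccos (Real.sqrt (g / Gm)))
      (-(1 / (2 * Real.sqrt x * Real.sqrt (Gm - x)))) x := by
  have hxGm : 0 < x / Gm := div_pos hx hGm
  have hlt1 : x / Gm < 1 := (div_lt_one hGm).2 hxG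
  have hs : Real.sqrt (x / Gm) < 1 := by
    have := Real.sqrt_lt_sqrt (le_of_lt hxGm) hlt1
    simpa using this
  have hs0 : 0 < Real.sqrt (x / Gm) := Real.sqrt_pos.2 hxGm
  have h1 : HasDerivAt (fun g : ℝ => g / Gm) (1 / Gm) x := by
    simpa using (hasDerivAt_id x).div_const Gm
  have h2 : HasDerivAt Real.sqrt (1 / (2 * Real.sqrt (x / Gm))) (x / Gm) :=
    Real.hasDerivAt_sqrt (ne_of_gt hxGm)
  have h3 := h2.comp x h1
  have h4 : HasDerivAt Real.arccos (-(1 / Real.sqrt (1 - Real.sqrt (x / Gm) ^ 2)))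
      (Real.sqrt (x / Gm)) :=
    Real.hasDerivAt_arccos (by linarith) (ne_of_lt hs)
  have h5 := h4.comp x h3
  refine h5.congr_deriv ?_
  rw [Real.sq_sqrt (le_of_lt hxGm)]
  have e1 : 1 - x / Gm = (Gm - x) / Gm := by field_simp
  rw [e1, Real.sqrt_div (by linarith), Real.sqrt_div (le_of_lt hx)]
  have hG0 : Real.sqrt Gm ≠ 0 := ne_of_gt (Real.sqrt_pos.2 hGm)
  have hx0 : Real.sqrt x ≠ 0 := ne_of_gt (Real.sqrt_pos.2 hx)
  have hGx0 : Real.sqrt (Gm - x) ≠ 0 := ne_of_gt (Real.sqrt_pos.2 (by linarith))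
  have hGsq : Real.sqrt Gm * Real.sqrt Gm = Gm := Real.mul_self_sqrt (le_of_lt hGm)
  field_simp
  ring_nf
  rw [Real.sq_sqrt hGm.le]

lemma integral_pdf_eq (Gm τ ε₀ : ℝ) (hGm : 0 < Gm) (hτ0 : 0 < τ) (hε0 : 0 < ε₀)
    (a b : ℝ) (ha : 0 < a) (hab : a ≤ b) (hb : b ≤ Gm) :
    ∫ g in a..b, 1 / (τ * ε₀ * Real.sqrt g * Real.sqrt (Gm - g))
      = 2 / (τ * ε₀) * (Real.arccos (Real.sqrt (a / Gm)) - Real.arccos (Real.sqrt (b / Gm))) := by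
  set F : ℝ → ℝ := fun g => -(2 / (τ * ε₀)) * Real.arccos (Real.sqrt (g / Gm)) with hF
  set f : ℝ → ℝ := fun g => 1 / (τ * ε₀ * Real.sqrt g * Real.sqrt (Gm - g)) with hf
  have hcont : Continuous F := by
    apply continuous_const.mul
    exact Real.continuous_arccos.comp (Real.continuous_sqrt.comp (continuous_id.div_const Gm))
  have hderiv : ∀ x ∈ Set.Ioo a b, HasDerivAt F (f x) x := by
    intro x hx
    have hx0 : 0 < x := lt_of_lt_of_le ha hx.1.le
    have hxG : x < Gm := lt_of_lt_of_le hx.2 hb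
    have := (deriv_arccos_sqrt_div hGm hx0 hxG).const_mul (-(2 / (τ * ε₀)))
    refine this.congr_deriv ?_
    have h1 : Real.sqrt x ≠ 0 := ne_of_gt (Real.sqrt_pos.2 hx0)
    have h2 : Real.sqrt (Gm - x) ≠ 0 := ne_of_gt (Real.sqrt_pos.2 (by linarith))
    rw [hf]
    field_simp
  have hnonneg : ∀ x ∈ Set.Ioo a b, 0 ≤ f x := by
    intro x _
    apply div_nonneg one_pos.le
    have := Real.sqrt_nonneg x
    have := Real.sqrt_nonneg (Gm - x)
    positivity
  have hint : IntervalIntegrable f volume a b := by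
    apply intervalIntegral.intervalIntegrable_deriv_of_nonneg (g := F) hcont.continuousOn
    · rwa [min_eq_left hab, max_eq_right hab]
    · rwa [min_eq_left hab, max_eq_right hab]
  rw [intervalIntegral.integral_eq_sub_of_hasDeriv_right_of_le hab hcont.continuousOn
    (fun x hx => (hderiv x hx).hasDerivWithinAt) hint]
  rw [hF]
  ring

theorem prob_gain_interval_eq_integral_pdf (Gm τ ε₀ : ℝ) (hGm : 0 < Gm) (hτ : 1 ≤ τ)
    (hε₁ : Real.pi / τ ≤ ε₀) (hε₂ : ε₀ < Real.pi) :
    ∀ a b : ℝ, 0 < a → a ≤ b → b ≤ Gm →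
      (volume {θ ∈ Set.Icc (-ε₀) ε₀ | a ≤ gain Gm τ θ ∧ gain Gm τ θ ≤ b}).toReal / (2 * ε₀)
        = ∫ g in a..b, 1 / (τ * ε₀ * Real.sqrt g * Real.sqrt (Gm - g)) := by
  intro a b ha hab hb
  have hτ0 : 0 < τ := lt_of_lt_of_le one_pos hτ
  have hε0 : 0 < ε₀ := lt_of_lt_of_le (div_pos Real.pi_pos hτ0) hε₁
  rw [gain_set_eq Gm τ ε₀ hGm hτ hε₁ a b ha hab hb,
    integral_pdf_eq Gm τ ε₀ hGm hτ0 hε0 a b ha hab hb]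
  set α := Real.arccos (Real.sqrt (a / Gm)) with hα
  set β := Real.arccos (Real.sqrt (b / Gm)) with hβ
  have hα0 : 0 ≤ α := Real.arccos_nonneg _
  have hβ0 : 0 ≤ β := Real.arccos_nonneg _
  have hβα : β ≤ α := arccos_anti (Real.sqrt_le_sqrt (div_le_div_of_nonneg_right hab hGm.le))
  set A := Set.Icc (-(2 * α / τ)) (-(2 * β / τ)) with hA
  set B := Set.Icc (2 * β / τ) (2 * α / τ) with hB
  have hsub : A ∩ B ⊆ {(0 : ℝ)} := by
    rintro x ⟨⟨_, hx2⟩, ⟨hx3, _⟩⟩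
    have h1 : 0 ≤ 2 * β / τ := by positivity
    simp only [Set.mem_singleton_iff]
    linarith
  have hinter : volume (A ∩ B) = 0 :=
    measure_mono_null hsub (measure_singleton 0)
  have hU : volume (A ∪ B) = volume A + volume B := by
    have h := measure_union_add_inter (μ := volume) A
      (measurableSet_Icc (a := 2 * β / τ) (b := 2 * α / τ))
    rw [hinter, add_zero] at h
    exact h
  have hlen : 0 ≤ 2 * α / τ - 2 * β / τ := by
    have h2 : 2 * β / τ ≤ 2 * α / τ := by
      apply div_le_div_of_nonneg_right _ hτ0.le
      linarith
    linarith
  have hvolA : volume A = ENNReal.ofReal (2 * α / τ - 2 * β / τ) := by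
    rw [hA, Real.volume_Icc]
    congr 1
    ring
  have hvolB : volume B = ENNReal.ofReal (2 * α / τ - 2 * β / τ) := by
    rw [hB, Real.volume_Icc]
  rw [hU, hvolA, hvolB, ← ENNReal.ofReal_add hlen hlen, ENNReal.toReal_ofReal (by linarith)]
  field_simp
  ring
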